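/- Let G be a triorthogonal matrix with k_T odd-weight rows G_T and k_0 even-weight rows G_0. Then the padded matrix G̃ = [[I, G_T],[0, G_0]] (with I a k_T×k_T identity block) is a triorthogonal matrix all of whose rows have even weight, and its row span is a triorthogonal subspace. -/
import Mathlib

lemma zmod2_mul_self (x : ZMod 2) : x * x = x := by revert x; decide

lemma zmod2_cases (x : ZMod 2) : x = 0 ∨ x = 1 := by revert x; decide

lemma even_card_filter_iff {m : Type*} [Fintype m] (f : m → ZMod 2) :
    Even ((Finset.univ.filter (fun j => f j = 1)).card) ↔ ∑ j, f j = 0 := by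
  have h1 : ∑ j, f j = ((Finset.univ.filter (fun j => f j = 1)).card : ZMod 2) := by
    rw [← Finset.sum_boole]
    refine Finset.sum_congr rfl fun j _ => ?_
    rcases zmod2_cases (f j) with h | h <;> simp [h]
  rw [h1, ZMod.natCast_eq_zero_iff]
  exact even_iff_two_dvd



/-- Rows of the original triorthogonal matrix `G = [G_T; G_0]`. -/
def origRow {kT k0 n : ℕ} (GT : Matrix (Fin kT) (Fin n) (ZMod 2))
    (G0 : Matrix (Fin k0) (Fin n) (ZMod 2)) : Fin kT ⊕ Fin k0 → Fin n → ZMod 2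
  | Sum.inl a => GT a
  | Sum.inr a => G0 a

/-- Rows of the padded matrix `G̃ = [[I, G_T],[0, G_0]]`. -/
def paddedRow {kT k0 n : ℕ} (GT : Matrix (Fin kT) (Fin n) (ZMod 2))
    (G0 : Matrix (Fin k0) (Fin n) (ZMod 2)) :
    Fin kT ⊕ Fin k0 → (Fin kT ⊕ Fin n) → ZMod 2
  | Sum.inl a, Sum.inl b => if a = b then 1 else 0
  | Sum.inl a, Sum.inr j => GT a j
  | Sum.inr _, Sum.inl _ => 0
  | Sum.inr a, Sum.inr j => G0 a j

/-- Padding a triorthogonal matrix with an identity block next to its odd-weight rows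
yields a triorthogonal matrix all of whose rows have even weight, whose row span is a
triorthogonal subspace. -/
theorem padded_triorthogonal {kT k0 n : ℕ}
    (GT : Matrix (Fin kT) (Fin n) (ZMod 2)) (G0 : Matrix (Fin k0) (Fin n) (ZMod 2))
    (hpair : ∀ a b : Fin kT ⊕ Fin k0, a ≠ b →
      ∑ j, origRow GT G0 a j * origRow GT G0 b j = 0)
    (htriple : ∀ a b c : Fin kT ⊕ Fin k0, a ≠ b → a ≠ c → b ≠ c →
      ∑ j, origRow GT G0 a j * origRow GT G0 b j * origRow GT G0 c j = 0)
    (hodd : ∀ a : Fin kT, ∑ j, GT a j = 1)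
    (heven : ∀ a : Fin k0, ∑ j, G0 a j = 0) :
    (∀ a b : Fin kT ⊕ Fin k0, a ≠ b →
      ∑ j, paddedRow GT G0 a j * paddedRow GT G0 b j = 0) ∧
    (∀ a b c : Fin kT ⊕ Fin k0, a ≠ b → a ≠ c → b ≠ c →
      ∑ j, paddedRow GT G0 a j * paddedRow GT G0 b j * paddedRow GT G0 c j = 0) ∧
    (∀ a : Fin kT ⊕ Fin k0,
      Even ((Finset.univ.filter (fun j => paddedRow GT G0 a j = 1)).card)) ∧
    (∀ u ∈ Submodule.span (ZMod 2) (Set.range (paddedRow GT G0)),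
     ∀ v ∈ Submodule.span (ZMod 2) (Set.range (paddedRow GT G0)),
     ∀ w ∈ Submodule.span (ZMod 2) (Set.range (paddedRow GT G0)),
      Even ((Finset.univ.filter (fun j => u j * v j * w j = 1)).card)) := by
  -- Part 1: pairwise orthogonality of padded rows
  have P1 : ∀ a b : Fin kT ⊕ Fin k0, a ≠ b →
      ∑ j, paddedRow GT G0 a j * paddedRow GT G0 b j = 0 := by
    intro a b hab
    have H := hpair a b hab
    rcases a with a | a <;> rcases b with b | b
    · have hab' : a ≠ b := by simpa using hab
      simpa [paddedRow, Fintype.sum_sum_type, origRow, mul_ite, ite_mul,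
        Finset.sum_ite_eq, hab', hab'.symm] using H
    all_goals
      simpa [paddedRow, Fintype.sum_sum_type, origRow, mul_ite, ite_mul,
        Finset.sum_ite_eq] using H
  -- Part 2: triple orthogonality of padded rows
  have P2 : ∀ a b c : Fin kT ⊕ Fin k0, a ≠ b → a ≠ c → b ≠ c →
      ∑ j, paddedRow GT G0 a j * paddedRow GT G0 b j * paddedRow GT G0 c j = 0 := by
    intro a b c hab hac hbc
    have H := htriple a b c hab hac hbc
    rcases a with a | a <;> rcases b with b | b <;> rcases c with c | c
    · have hab' : a ≠ b := by simpa using hab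
      have hac' : a ≠ c := by simpa using hac
      have hbc' : b ≠ c := by simpa using hbc
      simpa [paddedRow, Fintype.sum_sum_type, origRow, mul_ite, ite_mul,
        Finset.sum_ite_eq, hab', hab'.symm, hac', hac'.symm, hbc', hbc'.symm] using H
    all_goals
      simpa [paddedRow, Fintype.sum_sum_type, origRow, mul_ite, ite_mul,
        Finset.sum_ite_eq] using H
  -- Row sums of padded matrix are zero
  have Prow : ∀ a : Fin kT ⊕ Fin k0, ∑ j, paddedRow GT G0 a j = 0 := by
    intro a
    rcases a with a | a <;>
      [(simp [paddedRow, Fintype.sum_sum_type, Finset.sum_ite_eq, hodd]; decide);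
       simp [paddedRow, Fintype.sum_sum_type, heven]]
  refine ⟨P1, P2, fun a => (even_card_filter_iff _).2 (Prow a), ?_⟩
  -- Triorthogonality of the span
  set g := paddedRow GT G0 with hg
  have hmulself : ∀ x y : ZMod 2, x * y * x = x * y := by decide
  have hmulself' : ∀ x y : ZMod 2, x * y * y = x * y := by decide
  -- The trilinear form vanishes on all (not necessarily distinct) triples of rows
  have hT : ∀ a b c : Fin kT ⊕ Fin k0, ∑ j, g a j * g b j * g c j = 0 := by
    intro a b c
    by_cases hab : a = b
    · subst hab
      by_cases hac : a = c
      · subst hac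
        simpa [zmod2_mul_self] using Prow a
      · simpa [zmod2_mul_self] using P1 a c hac
    · by_cases hac : a = c
      · subst hac
        calc ∑ j, g a j * g b j * g a j = ∑ j, g a j * g b j :=
              Finset.sum_congr rfl fun j _ => hmulself _ _
          _ = 0 := P1 a b hab
      · by_cases hbc : b = c
        · subst hbc
          calc ∑ j, g a j * g b j * g b j = ∑ j, g a j * g b j :=
                Finset.sum_congr rfl fun j _ => hmulself' _ _
            _ = 0 := P1 a b hab
        · exact P2 a b c hab hac hbc
  intro u hu v hv w hw
  rw [even_card_filter_iff]
  have key : ∀ u ∈ Submodule.span (ZMod 2) (Set.range g),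
      ∀ v ∈ Submodule.span (ZMod 2) (Set.range g),
      ∀ w ∈ Submodule.span (ZMod 2) (Set.range g),
      ∑ j, u j * v j * w j = 0 := by
    intro u hu
    induction hu using Submodule.span_induction with
    | mem x hx =>
      obtain ⟨a, rfl⟩ := hx
      intro v hv
      induction hv using Submodule.span_induction with
      | mem y hy =>
        obtain ⟨b, rfl⟩ := hy
        intro w hw
        induction hw using Submodule.span_induction with
        | mem z hz => obtain ⟨c, rfl⟩ := hz; exact hT a b c
        | zero => simp
        | add z₁ z₂ _ _ h1 h2 =>
          simp only [Pi.add_apply, mul_add, Finset.sum_add_distrib, h1, h2, add_zero]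
        | smul r z _ h =>
          have e : ∑ j, g a j * g b j * (r • z) j = r * ∑ j, g a j * g b j * z j := by
            rw [Finset.mul_sum]
            exact Finset.sum_congr rfl fun j _ => by
              simp only [Pi.smul_apply, smul_eq_mul]; ring
          rw [e, h, mul_zero]
      | zero => intro w hw; simp
      | add y₁ y₂ _ _ h1 h2 =>
        intro w hw
        have e1 := h1 w hw; have e2 := h2 w hw
        simp only [Pi.add_apply, add_mul, mul_add, Finset.sum_add_distrib, e1, e2, add_zero]
      | smul r y _ h =>
        intro w hw
        have e : ∑ j, g a j * (r • y) j * w j = r * ∑ j, g a j * y j * w j := by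
          rw [Finset.mul_sum]
          exact Finset.sum_congr rfl fun j _ => by
            simp only [Pi.smul_apply, smul_eq_mul]; ring
        rw [e, h w hw, mul_zero]
    | zero => intro v hv w hw; simp
    | add x₁ x₂ _ _ h1 h2 =>
      intro v hv w hw
      have e1 := h1 v hv w hw; have e2 := h2 v hv w hw
      simp only [Pi.add_apply, add_mul, Finset.sum_add_distrib, e1, e2, add_zero]
    | smul r x _ h =>
      intro v hv w hw
      have e : ∑ j, (r • x) j * v j * w j = r * ∑ j, x j * v j * w j := by
        rw [Finset.mul_sum]
        exact Finset.sum_congr rfl fun j _ => by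
          simp only [Pi.smul_apply, smul_eq_mul]; ring
      rw [e, h v hv w hw, mul_zero]
  exact key u hu v hv w hw
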